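/- The m-form Re(dz₁∧⋯∧dzₘ) is a calibration on ℂᵐ with its standard Euclidean metric: it is closed, and for every oriented real m-dimensional subspace V of ℂᵐ, Re(dz₁∧⋯∧dzₘ)|_V ≤ vol_V. -/

import Mathlib

open Complex

/-- Ω = dz₁∧⋯∧dzₘ evaluated on an m-tuple of vectors of ℂᵐ. -/
noncomputable def holVol {m : ℕ} (e : Fin m → EuclideanSpace ℂ (Fin m)) : ℂ :=
  Matrix.det (Matrix.of fun i j => e i j)

/-- Real-orthonormality: Re⟪eᵢ,eⱼ⟫ = δᵢⱼ (orthonormality for the real inner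
product of ℂᵐ ≅ ℝ^{2m}); a real-orthonormal basis e of an oriented real m-plane
V has vol_V(e) = 1, so Re Ω|_V = α·vol_V with α = Re Ω(e). -/
def RealOrthonormal {m : ℕ} (e : Fin m → EuclideanSpace ℂ (Fin m)) : Prop :=
  ∀ i j, (@inner ℂ _ _ (e i) (e j)).re = if i = j then 1 else 0

/-- The m-form Re(dz₁∧⋯∧dzₘ) as a differential form on ℂᵐ: at each base point
x it assigns to an m-tuple of tangent vectors the value Re Ω(e). -/
noncomputable def reOmegaForm (m : ℕ) (_x : EuclideanSpace ℂ (Fin m))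
    (e : Fin m → EuclideanSpace ℂ (Fin m)) : ℝ :=
  (holVol e).re

open scoped ComplexOrder
open Matrix

lemma trace_eq_sum_eig {m : ℕ} {H : Matrix (Fin m) (Fin m) ℂ} (hH : H.IsHermitian) :
    H.trace = ∑ i, (hH.eigenvalues i : ℂ) := by
  conv_lhs => rw [hH.spectral_theorem]
  rw [Unitary.conjStarAlgAut_apply, trace_mul_cycle]
  simp [Matrix.mem_unitaryGroup_iff'.mp (hH.eigenvectorUnitary).2, trace_diagonal]

lemma amgm {m : ℕ} (hm : m ≠ 0) (z : Fin m → ℝ) (hz : ∀ i, 0 ≤ z i)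
    (hsum : ∑ i, z i = m) : ∏ i, z i ≤ 1 := by
  have hw : ∑ _i : Fin m, (1 / m : ℝ) = 1 := by
    simp [Finset.sum_const]
    field_simp
  have key := Real.geom_mean_le_arith_mean_weighted Finset.univ (fun _ => (1/m : ℝ)) z
    (fun i _ => by positivity) hw (fun i _ => hz i)
  have hre : ∑ i, (1/m : ℝ) * z i = 1 := by
    rw [← Finset.mul_sum, hsum]; field_simp
  rw [hre] at key
  have hpow : ∏ i, z i = (∏ i, z i ^ (1/m : ℝ)) ^ (m : ℕ) := by
    rw [← Finset.prod_pow]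
    congr 1; ext i
    rw [← Real.rpow_natCast (z i ^ (1/m : ℝ)) m, ← Real.rpow_mul (hz i)]
    rw [one_div, inv_mul_cancel₀ (by exact_mod_cast hm), Real.rpow_one]
  rw [hpow]
  exact pow_le_one₀ (Finset.prod_nonneg fun i _ => Real.rpow_nonneg (hz i) _) key

lemma det_re_le_one {m : ℕ} (A : Matrix (Fin m) (Fin m) ℂ)
    (hdiag : ∀ i, ((A * Aᴴ) i i).re = 1) : (A.det).re ≤ 1 := by
  rcases Nat.eq_zero_or_pos m with hm | hm
  · subst hm; simp [Matrix.det_fin_zero]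
  have hH : (A * Aᴴ).PosSemidef := posSemidef_self_mul_conjTranspose A
  have hHerm := hH.1
  set μ := hHerm.eigenvalues with hμ
  have hnn : ∀ i, 0 ≤ μ i := hH.eigenvalues_nonneg
  have hsum : ∑ i, μ i = m := by
    have h1 := trace_eq_sum_eig hHerm
    have h2 : ((A * Aᴴ).trace).re = ∑ i, μ i := by
      rw [h1]; rw [Complex.re_sum]; simp; rfl
    have h3 : ((A * Aᴴ).trace).re = (m : ℝ) := by
      rw [Matrix.trace, Complex.re_sum]
      simp only [Matrix.diag]
      rw [Finset.sum_congr rfl (fun i _ => hdiag i)]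
      simp
    rw [← h2, h3]
  have hdet : Complex.normSq A.det = ∏ i, μ i := by
    have : (A * Aᴴ).det = ∏ i, (μ i : ℂ) := hHerm.det_eq_prod_eigenvalues
    rw [Matrix.det_mul, Matrix.det_conjTranspose] at this
    have h4 := congrArg Complex.re this
    rw [show star A.det = (starRingEnd ℂ) A.det from rfl, Complex.mul_conj,
      ← Complex.ofReal_prod, Complex.ofReal_re, Complex.ofReal_re] at h4
    exact h4
  have hle : Complex.normSq A.det ≤ 1 := hdet ▸ amgm hm.ne' μ hnn hsum
  have habs : ‖A.det‖ ≤ 1 := by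
    have := Complex.sq_norm A.det
    nlinarith [norm_nonneg A.det]
  calc (A.det).re ≤ ‖A.det‖ := Complex.re_le_norm _
    _ ≤ 1 := habs


/- STATEMENT 12: Re(dz₁∧⋯∧dzₘ) is a calibration on ℂᵐ with the flat metric: it is
closed (being a constant-coefficient form — its coefficients do not depend on the
base point, so its exterior derivative is zero) and for every oriented real
m-dimensional subspace V of ℂᵐ, Re Ω|_V ≤ vol_V, i.e. Re Ω(e) ≤ 1 on any
real-orthonormal basis e of V. -/
theorem stmt12 (m : ℕ) :
    (∀ x y : EuclideanSpace ℂ (Fin m), reOmegaForm m x = reOmegaForm m y) ∧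
    (∀ e : Fin m → EuclideanSpace ℂ (Fin m), RealOrthonormal e →
      reOmegaForm m 0 e ≤ 1) := by
  constructor
  · intro x y; rfl
  · intro e he
    apply det_re_le_one (Matrix.of fun i j => e i j)
    intro i
    have h := he i i
    simp only [if_pos rfl, if_true] at h
    rw [← h]
    simp [Matrix.mul_apply, Matrix.conjTranspose_apply, PiLp.inner_apply,
      RCLike.inner_apply, Complex.re_sum, mul_comm, -inner_self_eq_norm_sq_to_K]
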